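/- Let X be a BK space containing the finitely supported sequences and A a matrix inducing a bounded operator L_A : X → ℓ_1. Then lim_m sup_{N ∈ F_m} ‖Σ_{n∈N} A_n‖*_X ≤ ‖L_A‖_χ ≤ 4 · lim_m sup_{N ∈ F_m} ‖Σ_{n∈N} A_n‖*_X, where F_m is the collection of nonempty finite subsets of ℕ with all elements greater than m. -/

import Mathlib

open scoped BigOperators ENNReal
open Filter Topology

noncomputable def fibr (n : ℕ) : ℝ := (Nat.fib (n + 1) : ℝ)

lemma fibr_pos (n : ℕ) : 0 < fibr n := by
  simpa [fibr] using Nat.cast_pos.mpr (Nat.fib_pos.mpr (Nat.succ_pos n))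

noncomputable def Fhat (x : ℕ → ℝ) : ℕ → ℝ
  | 0 => x 0
  | (n + 1) => fibr (n + 1) / fibr (n + 2) * x (n + 1) - fibr (n + 2) / fibr (n + 1) * x n

lemma Fhat_add (x y : ℕ → ℝ) : Fhat (x + y) = Fhat x + Fhat y := by
  funext n; cases n <;> simp [Fhat] <;> ring

lemma Fhat_smul (c : ℝ) (x : ℕ → ℝ) : Fhat (c • x) = c • Fhat x := by
  funext n; cases n <;> simp [Fhat] <;> ring

noncomputable def FhatL : (ℕ → ℝ) →ₗ[ℝ] (ℕ → ℝ) where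
  toFun := Fhat
  map_add' := Fhat_add
  map_smul' := Fhat_smul

lemma Fhat_inj : Function.Injective Fhat := by
  have h0 : ∀ x : ℕ → ℝ, Fhat x = 0 → x = 0 := by
    intro x hx
    funext n
    induction n with
    | zero => simpa [Fhat] using congrFun hx 0
    | succ n ih =>
        have h := congrFun hx (n + 1)
        simp only [Fhat, ih, Pi.zero_apply, mul_zero, sub_zero] at h
        have h1 : fibr (n + 1) / fibr (n + 2) ≠ 0 :=
          div_ne_zero (fibr_pos _).ne' (fibr_pos _).ne'
        simpa [Pi.zero_apply] using (mul_eq_zero.mp h).resolve_left h1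
  have : Function.Injective FhatL := (injective_iff_map_eq_zero' FhatL).mpr
    (fun x => ⟨fun h => h0 x h, fun h => by simp [FhatL, h]; funext n; cases n <;> simp [Fhat]⟩)
  exact this

noncomputable def FhatLP : PreLp (fun _ : ℕ => ℝ) →ₗ[ℝ] PreLp (fun _ : ℕ => ℝ) where
  toFun x := Fhat x
  map_add' x y := Fhat_add x y
  map_smul' c x := Fhat_smul c x

noncomputable def ellF (p : ℝ≥0∞) : Submodule ℝ (PreLp (fun _ : ℕ => ℝ)) :=
  (lpSubmodule ℝ (fun _ : ℕ => ℝ) p).comap FhatLP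

instance (p : ℝ≥0∞) : CoeOut (ellF p) (ℕ → ℝ) := ⟨fun x => (x : PreLp (fun _ : ℕ => ℝ))⟩

noncomputable def ellFtoLp (p : ℝ≥0∞) : ellF p →ₗ[ℝ] lp (fun _ : ℕ => ℝ) p where
  toFun x := ⟨Fhat (x : ℕ → ℝ), x.2⟩
  map_add' x y := Subtype.ext (Fhat_add (x : ℕ → ℝ) (y : ℕ → ℝ))
  map_smul' c x := Subtype.ext (Fhat_smul c (x : ℕ → ℝ))

lemma ellFtoLp_inj (p : ℝ≥0∞) : Function.Injective (ellFtoLp p) := by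
  intro x y h
  have h2 : Fhat (x : ℕ → ℝ) = Fhat (y : ℕ → ℝ) := congrArg Subtype.val h
  exact Subtype.ext (Fhat_inj h2)

noncomputable instance (p : ℝ≥0∞) [Fact (1 ≤ p)] : NormedAddCommGroup (ellF p) :=
  NormedAddCommGroup.induced _ _ (ellFtoLp p) (ellFtoLp_inj p)

noncomputable instance (p : ℝ≥0∞) [Fact (1 ≤ p)] : NormedSpace ℝ (ellF p) :=
  NormedSpace.induced _ _ _ (ellFtoLp p)

noncomputable def abar (a : ℕ → ℝ) (k : ℕ) : ℝ :=
  ∑' j : ℕ, (fibr (k + j + 1)) ^ 2 / (fibr k * fibr (k + 1)) * a (k + j)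

noncomputable def hmnc {X : Type*} [MetricSpace X] (Q : Set X) : ℝ :=
  sInf {ε : ℝ | 0 < ε ∧ ∃ s : Finset X, Q ⊆ ⋃ x ∈ s, Metric.ball x ε}



theorem stmt16 {X : Type} [NormedAddCommGroup X] [NormedSpace ℝ X] [CompleteSpace X]
    (J : X →ₗ[ℝ] (ℕ → ℝ)) (hJinj : Function.Injective J)
    (hcoord : ∀ k : ℕ, Continuous fun x : X => J x k)
    (hphi : ∀ s : ℕ →₀ ℝ, (s : ℕ → ℝ) ∈ Set.range J)
    (A : ℕ → ℕ → ℝ) (L : X →L[ℝ] lp (fun _ : ℕ => ℝ) 1)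
    (hrows : ∀ n : ℕ, ∀ x : X, Summable fun k : ℕ => A n k * J x k)
    (hrep : ∀ x : X, ∀ n : ℕ, (L x : ℕ → ℝ) n = ∑' k : ℕ, A n k * J x k) :
    ∃ l : ℝ,
      Tendsto (fun m : ℕ =>
          sSup {c : ℝ | ∃ N : Finset ℕ, N.Nonempty ∧ (∀ n ∈ N, m < n) ∧
            c = sSup {t : ℝ | ∃ x : X, ‖x‖ ≤ 1 ∧ t = |∑' k : ℕ, (∑ n ∈ N, A n k) * J x k|}})
        atTop (𝓝 l) ∧
      l ≤ hmnc (⇑L '' Metric.sphere 0 1) ∧ hmnc (⇑L '' Metric.sphere 0 1) ≤ 4 * l := by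
  classical
  let T : Finset ℕ → Set ℝ := fun N =>
    {t : ℝ | ∃ x : X, ‖x‖ ≤ 1 ∧ t = |∑' k : ℕ, (∑ n ∈ N, A n k) * J x k|}
  let C : ℕ → Set ℝ := fun m =>
    {c : ℝ | ∃ N : Finset ℕ, N.Nonempty ∧ (∀ n ∈ N, m < n) ∧ c = sSup (T N)}
  let S : ℕ → ℝ := fun m => sSup (C m)
  have hnorm1 : ∀ f : lp (fun _ : ℕ => ℝ) 1, HasSum (fun n => |(f : ℕ → ℝ) n|) ‖f‖ := by
    intro f
    have h := lp.hasSum_norm (p := 1) (E := fun _ : ℕ => ℝ) (by simp) f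
    simpa using h
  have hsummable : ∀ f : lp (fun _ : ℕ => ℝ) 1, Summable fun n => |(f : ℕ → ℝ) n| :=
    fun f => (hnorm1 f).summable
  have key : ∀ (N : Finset ℕ) (x : X),
      ∑' k : ℕ, (∑ n ∈ N, A n k) * J x k = ∑ n ∈ N, (L x : ℕ → ℝ) n := by
    intro N x
    have h1 : (fun k : ℕ => (∑ n ∈ N, A n k) * J x k)
        = fun k : ℕ => ∑ n ∈ N, A n k * J x k := by
      funext k; rw [Finset.sum_mul]
    rw [h1, Summable.tsum_finsetSum fun n _ => hrows n x]
    exact Finset.sum_congr rfl fun n _ => (hrep x n).symm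
  have hLle : ∀ x : X, ‖x‖ ≤ 1 → ‖L x‖ ≤ ‖L‖ := fun x hx =>
    (L.le_opNorm x).trans (mul_le_of_le_one_right (norm_nonneg _) hx)
  have habs : ∀ (N : Finset ℕ) (x : X), ‖x‖ ≤ 1 → |∑ n ∈ N, (L x : ℕ → ℝ) n| ≤ ‖L‖ := by
    intro N x hx
    calc |∑ n ∈ N, (L x : ℕ → ℝ) n| ≤ ∑ n ∈ N, |(L x : ℕ → ℝ) n| :=
          Finset.abs_sum_le_sum_abs _ _
      _ ≤ ‖L x‖ := sum_le_hasSum N (fun _ _ => abs_nonneg _) (hnorm1 (L x))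
      _ ≤ ‖L‖ := hLle x hx
  have hTmem : ∀ N : Finset ℕ, (0 : ℝ) ∈ T N := by
    intro N
    refine ⟨0, by simp, ?_⟩
    rw [key]
    simp
  have hTbdd : ∀ N : Finset ℕ, ∀ t ∈ T N, t ≤ ‖L‖ := by
    rintro N t ⟨x, hx, rfl⟩
    rw [key]
    exact habs N x hx
  have hu0 : ∀ N : Finset ℕ, 0 ≤ sSup (T N) := fun N =>
    le_csSup ⟨‖L‖, fun t ht => hTbdd N t ht⟩ (hTmem N)
  have huL : ∀ N : Finset ℕ, sSup (T N) ≤ ‖L‖ := fun N => csSup_le ⟨0, hTmem N⟩ (hTbdd N)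
  have hCbdd : ∀ m : ℕ, ∀ c ∈ C m, c ≤ ‖L‖ := by
    rintro m c ⟨N, -, -, rfl⟩; exact huL N
  have hCmem : ∀ m : ℕ, sSup (T {m + 1}) ∈ C m := by
    intro m
    exact ⟨{m + 1}, Finset.singleton_nonempty _, by intro n hn; simp at hn; omega, rfl⟩
  have hS0 : ∀ m : ℕ, 0 ≤ S m := fun m =>
    le_trans (hu0 _) (le_csSup ⟨‖L‖, hCbdd m⟩ (hCmem m))
  have hSanti : Antitone S := by
    intro m m' hmm
    refine csSup_le_csSup ⟨‖L‖, hCbdd m⟩ ⟨_, hCmem m'⟩ ?_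
    rintro c ⟨N, h1, h2, h3⟩
    exact ⟨N, h1, fun n hn => lt_of_le_of_lt hmm (h2 n hn), h3⟩
  have hbdd_below : BddBelow (Set.range S) := ⟨0, by rintro _ ⟨m, rfl⟩; exact hS0 m⟩
  have htend : Tendsto S atTop (𝓝 (⨅ m, S m)) := tendsto_atTop_ciInf hSanti hbdd_below
  set l : ℝ := ⨅ m, S m with hldef
  have hl0 : 0 ≤ l := le_ciInf hS0
  have hlle : ∀ m, l ≤ S m := fun m => ciInf_le hbdd_below m
  have hmemS : ∀ (m : ℕ) (N : Finset ℕ), N.Nonempty → (∀ n ∈ N, m < n) →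
      sSup (T N) ≤ S m := fun m N h1 h2 => le_csSup ⟨‖L‖, hCbdd m⟩ ⟨N, h1, h2, rfl⟩
  have habsS : ∀ (m : ℕ) (N : Finset ℕ), (∀ n ∈ N, m < n) → ∀ x : X, ‖x‖ ≤ 1 →
      |∑ n ∈ N, (L x : ℕ → ℝ) n| ≤ S m := by
    intro m N hN x hx
    rcases N.eq_empty_or_nonempty with rfl | hne
    · simpa using hS0 m
    · have hmem : |∑ n ∈ N, (L x : ℕ → ℝ) n| ∈ T N := ⟨x, hx, by rw [key]⟩
      exact le_trans (le_csSup ⟨‖L‖, fun t ht => hTbdd N t ht⟩ hmem) (hmemS m N hne hN)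
  have hQsub : ∀ y ∈ ⇑L '' Metric.sphere (0 : X) 1, ‖y‖ ≤ ‖L‖ := by
    rintro y ⟨x, hx, rfl⟩
    exact hLle x (le_of_eq (mem_sphere_zero_iff_norm.mp hx))
  have hEne : (‖L‖ + 1) ∈ {ε : ℝ | 0 < ε ∧ ∃ s : Finset (lp (fun _ : ℕ => ℝ) 1),
      ⇑L '' Metric.sphere 0 1 ⊆ ⋃ x ∈ s, Metric.ball x ε} := by
    refine ⟨by positivity, {0}, ?_⟩
    intro y hy
    refine Set.mem_iUnion₂.mpr ⟨0, Finset.mem_singleton_self 0, ?_⟩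
    rw [Metric.mem_ball, dist_zero_right]
    exact lt_of_le_of_lt (hQsub y hy) (by linarith)
  -- part 1 : l ≤ hmnc
  have hd : l ≤ hmnc (⇑L '' Metric.sphere 0 1) := by
    show l ≤ sInf {ε : ℝ | 0 < ε ∧ ∃ s : Finset (lp (fun _ : ℕ => ℝ) 1),
      ⇑L '' Metric.sphere 0 1 ⊆ ⋃ x ∈ s, Metric.ball x ε}
    refine le_csInf ⟨_, hEne⟩ ?_
    rintro ε ⟨hε, s, hcov⟩
    refine le_of_forall_pos_le_add ?_
    intro δ hδ
    have htail : ∀ᶠ m : ℕ in atTop, ∀ c ∈ s,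
        ∑' n : ℕ, |(c : ℕ → ℝ) (n + (m + 1))| < δ := by
      rw [eventually_all_finset]
      intro c _
      have h0 : Tendsto (fun m : ℕ => ∑' n : ℕ, |(c : ℕ → ℝ) (n + m)|) atTop (𝓝 0) :=
        tendsto_sum_nat_add (fun n => |(c : ℕ → ℝ) n|)
      have h1 : Tendsto (fun m : ℕ => ∑' n : ℕ, |(c : ℕ → ℝ) (n + (m + 1))|) atTop (𝓝 0) :=
        h0.comp (tendsto_add_atTop_nat 1)
      exact h1.eventually_lt_const hδ
    obtain ⟨m, hm⟩ := htail.exists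
    have hSm : S m ≤ ε + δ := by
      refine csSup_le ⟨_, hCmem m⟩ ?_
      rintro c ⟨N, hNne, hNm, rfl⟩
      refine csSup_le ⟨0, hTmem N⟩ ?_
      rintro t ⟨x, hx, rfl⟩
      rw [key]
      rcases eq_or_ne x 0 with rfl | hx0
      · have : (L (0 : X) : ℕ → ℝ) = 0 := by rw [map_zero]; rfl
        rw [this]
        simp only [Pi.zero_apply, Finset.sum_const_zero, abs_zero]
        positivity
      · have hxn : 0 < ‖x‖ := norm_pos_iff.mpr hx0
        set y : X := ‖x‖⁻¹ • x with hydef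
        have hy : ‖y‖ = 1 := by
          rw [hydef, norm_smul, norm_inv, norm_norm, inv_mul_cancel₀ (ne_of_gt hxn)]
        have hyQ : L y ∈ ⇑L '' Metric.sphere 0 1 :=
          ⟨y, mem_sphere_zero_iff_norm.mpr hy, rfl⟩
        obtain ⟨c0, hc0s, hc0⟩ : ∃ c0 ∈ s, L y ∈ Metric.ball c0 ε := by
          have h := hcov hyQ
          simpa using h
        have hdist : ‖L y - c0‖ < ε := by rwa [Metric.mem_ball, dist_eq_norm] at hc0
        have hxy : x = ‖x‖ • y := by
          rw [hydef, smul_smul, mul_inv_cancel₀ (ne_of_gt hxn), one_smul]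
        have hLxy : ∀ n : ℕ, (L x : ℕ → ℝ) n = ‖x‖ * (L y : ℕ → ℝ) n := by
          intro n
          conv_lhs => rw [hxy]
          rw [map_smul, lp.coeFn_smul, Pi.smul_apply, smul_eq_mul]
        have hsum : ∑ n ∈ N, (L x : ℕ → ℝ) n = ‖x‖ * ∑ n ∈ N, (L y : ℕ → ℝ) n := by
          rw [Finset.mul_sum]
          exact Finset.sum_congr rfl fun n _ => hLxy n
        have hb1 : ∑ n ∈ N, |(L y : ℕ → ℝ) n - (c0 : ℕ → ℝ) n| ≤ ‖L y - c0‖ := by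
          refine le_trans (le_of_eq ?_)
            (sum_le_hasSum N (fun _ _ => abs_nonneg _) (hnorm1 (L y - c0)))
          exact Finset.sum_congr rfl fun n _ => by rw [lp.coeFn_sub, Pi.sub_apply]
        have himg : ∑ n ∈ N, |(c0 : ℕ → ℝ) n| ≤ ∑' n : ℕ, |(c0 : ℕ → ℝ) (n + (m + 1))| := by
          have hsum2 : ∑ n ∈ N, |(c0 : ℕ → ℝ) n|
              = ∑ j ∈ N.image (fun n => n - (m + 1)), |(c0 : ℕ → ℝ) (j + (m + 1))| := by
            rw [Finset.sum_image (by
              intro a ha b hb hab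
              have ha' := hNm a ha; have hb' := hNm b hb
              simp only at hab
              omega)]
            refine Finset.sum_congr rfl fun n hn => ?_
            have h5 := hNm n hn
            have h6 : n - (m + 1) + (m + 1) = n := by omega
            rw [h6]
          rw [hsum2]
          refine Summable.sum_le_tsum _ (fun _ _ => abs_nonneg _) ?_
          exact (hsummable c0).comp_injective (add_left_injective (m + 1))
        have hb2 : ∑ n ∈ N, |(c0 : ℕ → ℝ) n| < δ := lt_of_le_of_lt himg (hm c0 hc0s)
        have hb3 : |∑ n ∈ N, (L y : ℕ → ℝ) n|
            ≤ ∑ n ∈ N, |(L y : ℕ → ℝ) n - (c0 : ℕ → ℝ) n| + ∑ n ∈ N, |(c0 : ℕ → ℝ) n| := by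
          have he1 : ∑ n ∈ N, (L y : ℕ → ℝ) n
              = ∑ n ∈ N, ((L y : ℕ → ℝ) n - (c0 : ℕ → ℝ) n) + ∑ n ∈ N, (c0 : ℕ → ℝ) n := by
            rw [← Finset.sum_add_distrib]
            exact Finset.sum_congr rfl fun n _ => by ring
          calc |∑ n ∈ N, (L y : ℕ → ℝ) n|
              = |∑ n ∈ N, ((L y : ℕ → ℝ) n - (c0 : ℕ → ℝ) n) + ∑ n ∈ N, (c0 : ℕ → ℝ) n| := by
                rw [he1]
            _ ≤ |∑ n ∈ N, ((L y : ℕ → ℝ) n - (c0 : ℕ → ℝ) n)| + |∑ n ∈ N, (c0 : ℕ → ℝ) n| :=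
                abs_add_le _ _
            _ ≤ ∑ n ∈ N, |(L y : ℕ → ℝ) n - (c0 : ℕ → ℝ) n| + ∑ n ∈ N, |(c0 : ℕ → ℝ) n| :=
                add_le_add (Finset.abs_sum_le_sum_abs _ _) (Finset.abs_sum_le_sum_abs _ _)
        have hfin : |∑ n ∈ N, (L y : ℕ → ℝ) n| ≤ ε + δ := by linarith
        rw [hsum, abs_mul, abs_of_nonneg (norm_nonneg x)]
        calc ‖x‖ * |∑ n ∈ N, (L y : ℕ → ℝ) n| ≤ |∑ n ∈ N, (L y : ℕ → ℝ) n| :=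
              mul_le_of_le_one_left (abs_nonneg _) hx
          _ ≤ ε + δ := hfin
    exact le_trans (hlle m) hSm
  -- part 2 : hmnc ≤ 4 l
  have he : hmnc (⇑L '' Metric.sphere 0 1) ≤ 4 * l := by
    show sInf {ε : ℝ | 0 < ε ∧ ∃ s : Finset (lp (fun _ : ℕ => ℝ) 1),
      ⇑L '' Metric.sphere 0 1 ⊆ ⋃ x ∈ s, Metric.ball x ε} ≤ 4 * l
    refine le_of_forall_pos_le_add ?_
    intro δ hδ
    obtain ⟨m, hm⟩ : ∃ m : ℕ, S m < l + δ / 8 :=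
      (htend.eventually_lt_const (by linarith : l < l + δ / 8)).exists
    have ttail : ∀ x : X, ‖x‖ ≤ 1 → ∀ N : Finset ℕ, (∀ n ∈ N, m < n) →
        ∑ n ∈ N, |(L x : ℕ → ℝ) n| ≤ 2 * S m := by
      intro x hx N hN
      have hsplit := Finset.sum_filter_add_sum_filter_not N
        (fun n => 0 ≤ (L x : ℕ → ℝ) n) (fun n => |(L x : ℕ → ℝ) n|)
      have hP : ∑ n ∈ N.filter (fun n => 0 ≤ (L x : ℕ → ℝ) n), |(L x : ℕ → ℝ) n|
          = ∑ n ∈ N.filter (fun n => 0 ≤ (L x : ℕ → ℝ) n), (L x : ℕ → ℝ) n :=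
        Finset.sum_congr rfl fun n hn => abs_of_nonneg (Finset.mem_filter.mp hn).2
      have hM : ∑ n ∈ N.filter (fun n => ¬ 0 ≤ (L x : ℕ → ℝ) n), |(L x : ℕ → ℝ) n|
          = -∑ n ∈ N.filter (fun n => ¬ 0 ≤ (L x : ℕ → ℝ) n), (L x : ℕ → ℝ) n := by
        rw [← Finset.sum_neg_distrib]
        exact Finset.sum_congr rfl fun n hn =>
          abs_of_neg (lt_of_not_ge (Finset.mem_filter.mp hn).2)
      have h1 := habsS m (N.filter (fun n => 0 ≤ (L x : ℕ → ℝ) n))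
        (fun n hn => hN n (Finset.filter_subset _ _ hn)) x hx
      have h2 := habsS m (N.filter (fun n => ¬ 0 ≤ (L x : ℕ → ℝ) n))
        (fun n hn => hN n (Finset.filter_subset _ _ hn)) x hx
      have h1' := le_trans (le_abs_self _) h1
      have h2' := le_trans (neg_le_abs _) h2
      calc ∑ n ∈ N, |(L x : ℕ → ℝ) n|
          = ∑ n ∈ N.filter (fun n => 0 ≤ (L x : ℕ → ℝ) n), |(L x : ℕ → ℝ) n|
            + ∑ n ∈ N.filter (fun n => ¬ 0 ≤ (L x : ℕ → ℝ) n), |(L x : ℕ → ℝ) n| :=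
            hsplit.symm
        _ ≤ S m + S m := by rw [hP, hM]; exact add_le_add h1' h2'
        _ = 2 * S m := by ring
    have ttsum : ∀ x : X, ‖x‖ ≤ 1 →
        ∑' n : ℕ, |(L x : ℕ → ℝ) (n + (m + 1))| ≤ 2 * S m := by
      intro x hx
      refine Summable.tsum_le_of_sum_le
        ((hsummable (L x)).comp_injective (add_left_injective (m + 1))) ?_
      intro s0
      have himg : ∑ j ∈ s0, |(L x : ℕ → ℝ) (j + (m + 1))|
          = ∑ n ∈ s0.image (fun j => j + (m + 1)), |(L x : ℕ → ℝ) n| := by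
        rw [Finset.sum_image (by intro a _ b _ h; simp only at h; omega)]
      rw [himg]
      refine ttail x hx _ ?_
      intro n hn
      obtain ⟨j, -, rfl⟩ := Finset.mem_image.mp hn
      omega
    set R : ℝ := ‖L‖ with hRdef
    let φ : (ℕ → ℝ) → lp (fun _ : ℕ => ℝ) 1 := fun v =>
      ∑ i ∈ Finset.range (m + 1), v i • lp.single (E := fun _ : ℕ => ℝ) 1 i (1 : ℝ)
    have hφcoord : ∀ (v : ℕ → ℝ) (n : ℕ),
        (φ v : ℕ → ℝ) n = if n < m + 1 then v n else 0 := by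
      intro v n
      have hc : (φ v : ℕ → ℝ) n = ∑ i ∈ Finset.range (m + 1),
          v i * (lp.single (E := fun _ : ℕ => ℝ) 1 i (1 : ℝ) : ℕ → ℝ) n := by
        rw [lp.coeFn_sum, Finset.sum_apply]
        exact Finset.sum_congr rfl fun i _ => by
          rw [lp.coeFn_smul, Pi.smul_apply, smul_eq_mul]
      rw [hc]
      by_cases hn : n < m + 1
      · rw [if_pos hn, Finset.sum_eq_single n]
        · rw [lp.single_apply_self, mul_one]
        · intro i _ hne
          rw [lp.single_apply_ne 1 i _ (Ne.symm hne), mul_zero]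
        · intro h; exact absurd (Finset.mem_range.mpr hn) h
      · rw [if_neg hn]
        refine Finset.sum_eq_zero fun i hi => ?_
        rw [lp.single_apply_ne 1 i _ (by
          have := Finset.mem_range.mp hi; omega : n ≠ i), mul_zero]
    have hφcont : Continuous φ := by
      set_option maxHeartbeats 1000000 in
      exact continuous_finset_sum _ fun i _ =>
        ((continuous_apply i).smul (continuous_const
          (y := lp.single (E := fun _ : ℕ => ℝ) 1 i (1 : ℝ))))
    have hD : IsCompact (Set.pi Set.univ fun _ : ℕ => Set.Icc (-R) R) :=
      isCompact_univ_pi fun _ => isCompact_Icc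
    have hK : IsCompact (φ '' Set.pi Set.univ fun _ : ℕ => Set.Icc (-R) R) :=
      hD.image hφcont
    obtain ⟨t, htfin, htcov⟩ :=
      (Metric.totallyBounded_iff.mp hK.totallyBounded) (δ / 2) (by linarith)
    have hmem : (4 * l + δ) ∈ {ε : ℝ | 0 < ε ∧ ∃ s : Finset (lp (fun _ : ℕ => ℝ) 1),
        ⇑L '' Metric.sphere 0 1 ⊆ ⋃ x ∈ s, Metric.ball x ε} := by
      refine ⟨by linarith, htfin.toFinset, ?_⟩
      rintro _ ⟨x, hxs, rfl⟩
      have hx1 : ‖x‖ = 1 := mem_sphere_zero_iff_norm.mp hxs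
      have hx : ‖x‖ ≤ 1 := le_of_eq hx1
      set v : ℕ → ℝ := fun n => (L x : ℕ → ℝ) n with hvdef
      have hvi : ∀ i : ℕ, v i = (L x : ℕ → ℝ) i := fun _ => rfl
      have hvD : v ∈ Set.pi Set.univ fun _ : ℕ => Set.Icc (-R) R := by
        intro i _
        have h1 : |(L x : ℕ → ℝ) i| ≤ ‖L x‖ := by
          simpa using lp.norm_apply_le_norm one_ne_zero (L x) i
        have h2 : ‖L x‖ ≤ R := hLle x hx
        have h3 := abs_le.mp (h1.trans h2)
        exact ⟨h3.1, h3.2⟩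
      have hKmem : φ v ∈ φ '' Set.pi Set.univ fun _ : ℕ => Set.Icc (-R) R := ⟨v, hvD, rfl⟩
      obtain ⟨y, hyt, hy⟩ : ∃ y ∈ t, φ v ∈ Metric.ball y (δ / 2) := by
        have h := htcov hKmem
        simpa using h
      set w : lp (fun _ : ℕ => ℝ) 1 := L x - φ v with hwdef
      have hwcoe : ∀ n : ℕ, (w : ℕ → ℝ) n = (L x : ℕ → ℝ) n - (φ v : ℕ → ℝ) n := by
        intro n; rw [hwdef, lp.coeFn_sub, Pi.sub_apply]
      have hsum0 : ∑ i ∈ Finset.range (m + 1), |(w : ℕ → ℝ) i| = 0 := by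
        refine Finset.sum_eq_zero fun i hi => ?_
        rw [hwcoe, hφcoord, if_pos (Finset.mem_range.mp hi), hvi, sub_self, abs_zero]
      have hnear : ‖w‖ ≤ 2 * S m := by
        have h1 := (hnorm1 w).tsum_eq
        have h2 := Summable.sum_add_tsum_nat_add (f := fun n : ℕ => |(w : ℕ → ℝ) n|) (m + 1)
          (hsummable w)
        have h3 : ∑' n : ℕ, |(w : ℕ → ℝ) (n + (m + 1))| ≤ 2 * S m := by
          have h4 : ∀ n : ℕ, |(w : ℕ → ℝ) (n + (m + 1))| = |(L x : ℕ → ℝ) (n + (m + 1))| := by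
            intro n
            rw [hwcoe, hφcoord, if_neg (by omega), sub_zero]
          rw [tsum_congr h4]
          exact ttsum x hx
        linarith
      have hlt : dist (L x) y < 4 * l + δ := by
        have ht1 := dist_triangle (L x) (φ v) y
        have ht2 : dist (L x) (φ v) ≤ 2 * S m := by
          rw [dist_eq_norm, ← hwdef]
          exact hnear
        have ht3 : dist (φ v) y < δ / 2 := by
          rwa [Metric.mem_ball] at hy
        linarith
      exact Set.mem_iUnion₂.mpr ⟨y, htfin.mem_toFinset.mpr hyt, Metric.mem_ball.mpr hlt⟩
    exact csInf_le ⟨0, fun ε hε => hε.1.le⟩ hmem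
  exact ⟨l, htend, hd, he⟩
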